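/- Let K be a field of characteristic zero, a2(x) ∈ K[x] with deg a2(x) ≥ 1, a0 ∈ K* a nonzero constant, and a1(x) ∈ K[x] \ {0}. Let D = y∂x + (a2(x)y² + a1(x)y + a0)∂y be the K-derivation of K[x,y]. Suppose F(x,y) = Σ_{i=0}^n c_i(x)y^i ∉ K, with c_n(x) ≠ 0 and c_i(x) ∈ K[x], is a Darboux polynomial of D satisfying D(F) = Λ(x,y)·F for some Λ(x,y) ∈ K[x,y]. Then: (1) n ≥ 1, c_n(x) is a nonzero constant, and Λ(x,y) = n·a2(x)·y + d0(x) for some d0(x) ∈ K[x]; (2) if n ≥ 2 the coefficients satisfy c'_{n-1}(x) = a2(x)c_{n-1}(x) + (d0(x) − n·a1(x))c_n(x), (i+1)a0·c_{i+1}(x) = (n−i+1)a2(x)c_{i−1}(x) + (d0(x) − i·a1(x))c_i(x) − c'_{i−1}(x) for 1 ≤ i ≤ n−1, and a0·c_1(x) = d0(x)c_0(x), while if n = 1 the first and last of these equations hold; (3) if n ≥ 2 then c_{n-1}(x) ≠ 0 and d0(x) − n·a1(x) ∉ K; moreover, if additionally deg a1(x) = 0 and n ≥ 2, then deg d0(x)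 ≥ 1 and c_1(x)c_0(x) ≠ 0. -/
import Mathlib

open Polynomial in
noncomputable def s5phi (K : Type*) [CommSemiring K] :
    Polynomial (Polynomial K) →ₐ[K] MvPolynomial (Fin 2) K :=
  Polynomial.aevalTower (Polynomial.aeval (MvPolynomial.X 0)) (MvPolynomial.X 1)

open Polynomial in
noncomputable def s5rho (K : Type*) [CommSemiring K] :
    MvPolynomial (Fin 2) K →ₐ[K] Polynomial (Polynomial K) :=
  MvPolynomial.aeval ![Polynomial.C Polynomial.X, Polynomial.X]

@[simp] lemma s5phi_C {K : Type*} [CommSemiring K] (p : Polynomial K) :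
    s5phi K (Polynomial.C p) = Polynomial.aeval (MvPolynomial.X 0) p :=
  Polynomial.aevalTower_C _ _ _

@[simp] lemma s5phi_X {K : Type*} [CommSemiring K] :
    s5phi K Polynomial.X = MvPolynomial.X 1 :=
  Polynomial.aevalTower_X _ _

lemma s5rho_aeval {K : Type*} [CommSemiring K] (q : Polynomial K) :
    s5rho K (Polynomial.aeval (MvPolynomial.X 0) q) = Polynomial.C q := by
  rw [← Polynomial.aeval_algHom_apply]
  have h0 : s5rho K (MvPolynomial.X 0) = Polynomial.C Polynomial.X := by
    simp [s5rho]
  rw [h0]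
  have := Polynomial.aeval_algHom_apply
    (Polynomial.CAlgHom (R := K) (A := Polynomial K)) Polynomial.X q
  simpa [Polynomial.CAlgHom] using this

lemma s5rho_phi {K : Type*} [CommSemiring K] (p : Polynomial (Polynomial K)) :
    s5rho K (s5phi K p) = p := by
  induction p using Polynomial.induction_on' with
  | add f g hf hg => simp [map_add, hf, hg]
  | monomial k q =>
      rw [← Polynomial.C_mul_X_pow_eq_monomial]
      simp only [map_mul, map_pow, s5phi_C, s5phi_X, s5rho_aeval]
      congr 1
      simp [s5rho]

lemma s5phi_inj {K : Type*} [CommSemiring K] :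
    Function.Injective (s5phi K) := by
  intro a b h
  have := congrArg (s5rho K) h
  simpa [s5rho_phi] using this

lemma s5phi_rho {K : Type*} [CommSemiring K] (z : MvPolynomial (Fin 2) K) :
    s5phi K (s5rho K z) = z := by
  have : (s5phi K).comp (s5rho K) = AlgHom.id K _ := by
    apply MvPolynomial.algHom_ext
    intro i
    fin_cases i <;> simp [s5rho]
  exact AlgHom.congr_fun this z

theorem stmt_5 (K : Type*) [Field K] [CharZero K]
    (a2 : Polynomial K) (ha2 : 1 ≤ a2.degree)
    (a0 : K) (ha0 : a0 ≠ 0)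
    (a1 : Polynomial K) (ha1 : a1 ≠ 0)
    (D : Derivation K (MvPolynomial (Fin 2) K) (MvPolynomial (Fin 2) K))
    (hDx : D (MvPolynomial.X 0) = MvPolynomial.X 1)
    (hDy : D (MvPolynomial.X 1) =
      Polynomial.aeval (MvPolynomial.X 0) a2 * MvPolynomial.X 1 ^ 2 +
        Polynomial.aeval (MvPolynomial.X 0) a1 * MvPolynomial.X 1 +
        MvPolynomial.C a0)
    (n : ℕ) (c : ℕ → Polynomial K) (hcn : c n ≠ 0)
    (F : MvPolynomial (Fin 2) K)
    (hF : F = ∑ i ∈ Finset.range (n + 1),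
      Polynomial.aeval (MvPolynomial.X 0) (c i) * MvPolynomial.X 1 ^ i)
    (hFK : ∀ k : K, F ≠ MvPolynomial.C k)
    (Λ : MvPolynomial (Fin 2) K) (hDarboux : D F = Λ * F) :
    1 ≤ n ∧ (∃ k : K, k ≠ 0 ∧ c n = Polynomial.C k) ∧
    ∃ d0 : Polynomial K,
      Λ = (n : MvPolynomial (Fin 2) K) * Polynomial.aeval (MvPolynomial.X 0) a2 *
            MvPolynomial.X 1 + Polynomial.aeval (MvPolynomial.X 0) d0 ∧
      Polynomial.derivative (c (n - 1)) =
        a2 * c (n - 1) + (d0 - (n : Polynomial K) * a1) * c n ∧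
      (∀ i : ℕ, 1 ≤ i → i ≤ n - 1 →
        ((i : Polynomial K) + 1) * Polynomial.C a0 * c (i + 1) =
          ((n : Polynomial K) - (i : Polynomial K) + 1) * a2 * c (i - 1) +
            (d0 - (i : Polynomial K) * a1) * c i - Polynomial.derivative (c (i - 1))) ∧
      Polynomial.C a0 * c 1 = d0 * c 0 ∧
      (2 ≤ n → c (n - 1) ≠ 0 ∧ ∀ k : K, d0 - (n : Polynomial K) * a1 ≠ Polynomial.C k) ∧
      (a1.degree = 0 → 2 ≤ n → 1 ≤ d0.degree ∧ c 1 * c 0 ≠ 0) := by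
  classical
  set P : Polynomial (Polynomial K) :=
    ∑ i ∈ Finset.range (n+1), Polynomial.C (c i) * Polynomial.X ^ i with hPdef
  have hPc1 : ∀ k, k ≤ n → P.coeff k = c k := by
    intro k hk
    simp only [hPdef, Polynomial.finset_sum_coeff, Polynomial.coeff_C_mul,
      Polynomial.coeff_X_pow, mul_ite, mul_one, mul_zero]
    rw [Finset.sum_ite_eq (Finset.range (n+1)) k c]
    simp [Nat.lt_succ_iff, hk]
  have hPc2 : ∀ k, n < k → P.coeff k = 0 := by
    intro k hk
    simp only [hPdef, Polynomial.finset_sum_coeff, Polynomial.coeff_C_mul,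
      Polynomial.coeff_X_pow, mul_ite, mul_one, mul_zero]
    rw [Finset.sum_ite_eq (Finset.range (n+1)) k c]
    simp [Nat.lt_succ_iff]
    omega
  set Pd : Polynomial (Polynomial K) :=
    ∑ i ∈ Finset.range (n+1), Polynomial.C (Polynomial.derivative (c i)) * Polynomial.X ^ i
    with hPddef
  set G : Polynomial (Polynomial K) :=
    Polynomial.C a2 * Polynomial.X ^ 2 + Polynomial.C a1 * Polynomial.X +
      Polynomial.C (Polynomial.C a0) with hGdef
  set Q : Polynomial (Polynomial K) := Pd * Polynomial.X + Polynomial.derivative P * G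
    with hQdef
  have hFP : F = s5phi K P := by
    rw [hF, hPdef, map_sum]
    exact Finset.sum_congr rfl fun i _ => by simp
  have hdP : Polynomial.derivative P =
      ∑ i ∈ Finset.range (n+1),
        (i : Polynomial (Polynomial K)) * Polynomial.C (c i) * Polynomial.X ^ (i-1) := by
    rw [hPdef, Polynomial.derivative_sum]
    refine Finset.sum_congr rfl fun i _ => ?_
    rw [Polynomial.derivative_C_mul, Polynomial.derivative_X_pow, Polynomial.C_eq_natCast]
    ring
  have hQsum : Q = ∑ i ∈ Finset.range (n+1),
      (Polynomial.C (Polynomial.derivative (c i)) * Polynomial.X ^ (i+1) +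
        (i : Polynomial (Polynomial K)) * Polynomial.C (c i) * Polynomial.X ^ (i-1) * G) := by
    rw [hQdef, hdP, hPddef, Finset.sum_mul, Finset.sum_mul, ← Finset.sum_add_distrib]
    exact Finset.sum_congr rfl fun i _ => by ring
  have hDF : D F = s5phi K Q := by
    rw [hF, map_sum, hQsum, map_sum]
    refine Finset.sum_congr rfl fun i _ => ?_
    rw [Derivation.leibniz, Derivation.leibniz_pow, Derivation.map_aeval, hDx, hDy]
    simp only [map_add, map_mul, map_pow, map_natCast, s5phi_C, s5phi_X, hGdef,
      Polynomial.aeval_C, MvPolynomial.algebraMap_eq, smul_eq_mul, nsmul_eq_mul, smul_smul]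
    ring
  set L : Polynomial (Polynomial K) := s5rho K Λ with hLdef
  have hΛ : Λ = s5phi K L := (s5phi_rho Λ).symm
  have hQLP : Q = L * P := by
    apply s5phi_inj
    rw [map_mul, ← hFP, ← hDF, hDarboux, hΛ]
  have hPne : P ≠ 0 := fun h => hcn (by rw [← hPc1 n le_rfl, h, Polynomial.coeff_zero])
  have hPdeg : P.natDegree = n := le_antisymm
    (Polynomial.natDegree_le_iff_coeff_eq_zero.mpr fun N hN => hPc2 N hN)
    (Polynomial.le_natDegree_of_ne_zero (by rw [hPc1 n le_rfl]; exact hcn))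
  have hPdc1 : ∀ k, k ≤ n → Pd.coeff k = Polynomial.derivative (c k) := by
    intro k hk
    simp only [hPddef, Polynomial.finset_sum_coeff, Polynomial.coeff_C_mul,
      Polynomial.coeff_X_pow, mul_ite, mul_one, mul_zero]
    rw [Finset.sum_ite_eq (Finset.range (n+1)) k (fun i => Polynomial.derivative (c i))]
    simp [Nat.lt_succ_iff, hk]
  have hPdc2 : ∀ k, n < k → Pd.coeff k = 0 := by
    intro k hk
    simp only [hPddef, Polynomial.finset_sum_coeff, Polynomial.coeff_C_mul,
      Polynomial.coeff_X_pow, mul_ite, mul_one, mul_zero]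
    rw [Finset.sum_ite_eq (Finset.range (n+1)) k (fun i => Polynomial.derivative (c i))]
    simp [Nat.lt_succ_iff]
    omega
  have hPdc : ∀ k, Pd.coeff k = Polynomial.derivative (P.coeff k) := by
    intro k
    rcases le_or_gt k n with h | h
    · rw [hPdc1 k h, hPc1 k h]
    · rw [hPdc2 k h, hPc2 k h, Polynomial.derivative_zero]
  have hQdeg : Q.natDegree ≤ n + 1 := by
    have h1 : Pd.natDegree ≤ n :=
      Polynomial.natDegree_le_iff_coeff_eq_zero.mpr fun N hN => hPdc2 N hN
    have h2 : (Pd * Polynomial.X).natDegree ≤ n + 1 :=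
      Polynomial.natDegree_mul_le.trans (by simpa using h1)
    have h3 : (Polynomial.derivative P * G).natDegree ≤ n + 1 := by
      rcases Nat.eq_zero_or_pos n with h | h
      · have hP0 : P.natDegree = 0 := by rw [hPdeg, h]
        have : Polynomial.derivative P = 0 := by
          rw [Polynomial.eq_C_of_natDegree_eq_zero hP0]; simp
        simp [this]
      · have hG : G.natDegree ≤ 2 := by
          rw [hGdef]
          refine (Polynomial.natDegree_add_le _ _).trans (max_le ((Polynomial.natDegree_add_le _ _).trans (max_le ?_ ?_)) ?_)
          · exact (Polynomial.natDegree_C_mul_le _ _).trans (by simp)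
          · exact (Polynomial.natDegree_C_mul_le _ _).trans (by simp)
          · simp
        have hd : (Polynomial.derivative P).natDegree ≤ n - 1 := by
          have := Polynomial.natDegree_derivative_le P
          omega
        refine Polynomial.natDegree_mul_le.trans ?_
        omega
    rw [hQdef]
    exact (Polynomial.natDegree_add_le _ _).trans (max_le h2 h3)
  have hLdeg : L.natDegree ≤ 1 := by
    by_cases hL0 : L = 0
    · simp [hL0]
    · have hnd := Polynomial.natDegree_mul hL0 hPne
      rw [← hQLP, hPdeg] at hnd
      omega
  set l1 := L.coeff 1 with hl1def
  set l0 := L.coeff 0 with hl0def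
  have hL : L = Polynomial.C l1 * Polynomial.X + Polynomial.C l0 :=
    Polynomial.eq_X_add_C_of_degree_le_one (Polynomial.natDegree_le_iff_degree_le.mp hLdeg)
  -- master coefficient equations
  have hLP : L * P = Polynomial.C l1 * (P * Polynomial.X) + Polynomial.C l0 * P := by
    rw [hL]; ring
  have hQ' : Q = Pd * Polynomial.X +
      ((Polynomial.C a2 * Polynomial.derivative P) * Polynomial.X ^ 2 +
       (Polynomial.C a1 * Polynomial.derivative P) * Polynomial.X +
       Polynomial.C (Polynomial.C a0) * Polynomial.derivative P) := by
    rw [hQdef, hGdef]; ring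
  have E0 : Polynomial.C a0 * P.coeff 1 = l0 * P.coeff 0 := by
    have h := congrArg (fun p => Polynomial.coeff p 0) hQLP
    simp only [hQ', hLP, Polynomial.coeff_add, Polynomial.coeff_mul_X_zero,
      Polynomial.coeff_C_mul, Polynomial.coeff_mul_X_pow', Polynomial.coeff_derivative] at h
    norm_num at h
    linear_combination h
  have EG : ∀ m : ℕ, Polynomial.derivative (P.coeff m) + a2 * (P.coeff m * (m : Polynomial K)) +
      a1 * (P.coeff (m+1) * ((m : Polynomial K) + 1)) +
      Polynomial.C a0 * (P.coeff (m+2) * ((m : Polynomial K) + 2)) =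
      l1 * P.coeff m + l0 * P.coeff (m+1) := by
    intro m
    have h := congrArg (fun p => Polynomial.coeff p (m+1)) hQLP
    simp only [hQ', hLP, Polynomial.coeff_add, Polynomial.coeff_mul_X,
      Polynomial.coeff_C_mul, Polynomial.coeff_mul_X_pow', Polynomial.coeff_derivative,
      hPdc] at h
    rcases m with _ | m'
    · norm_num at h
      linear_combination h
    · have h2 : (2:ℕ) ≤ m' + 1 + 1 := by omega
      rw [if_pos h2] at h
      have he : m' + 1 + 1 - 2 = m' := by omega
      rw [he] at h
      push_cast at h ⊢
      linear_combination h
  -- n ≥ 1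
  have hn1 : 1 ≤ n := by
    by_contra hn
    have hn0 : n = 0 := by omega
    have hc0n : c 0 ≠ 0 := by rw [← hn0]; exact hcn
    have hc0K : (c 0).natDegree ≠ 0 := by
      intro h
      obtain ⟨k, hk⟩ := Polynomial.natDegree_eq_zero.mp h
      apply hFK k
      rw [hFP]
      have hPC : P = Polynomial.C (Polynomial.C k) := by
        rw [hPdef, hn0]; simp [hk]
      rw [hPC]
      simp [MvPolynomial.algebraMap_eq]
    have e := EG 0
    rw [hPc1 0 (by omega), hPc2 1 (by omega), hPc2 2 (by omega)] at e
    push_cast at e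
    have e' : Polynomial.derivative (c 0) = l1 * c 0 := by linear_combination e
    have hder : Polynomial.derivative (c 0) ≠ 0 := fun h =>
      hc0K (Polynomial.natDegree_eq_zero_of_derivative_eq_zero h)
    have hl1ne : l1 ≠ 0 := by
      intro hz; rw [hz, zero_mul] at e'; exact hder e'
    have h1 := Polynomial.natDegree_derivative_lt hc0K
    have h2 := Polynomial.natDegree_mul hl1ne hc0n
    rw [← e'] at h2
    omega
  -- c n is a nonzero constant, and l1 = n * a2
  have etop := EG n
  rw [hPc1 n le_rfl, hPc2 (n+1) (by omega), hPc2 (n+2) (by omega)] at etop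
  have etop' : Polynomial.derivative (c n) = (l1 - (n : Polynomial K) * a2) * c n := by
    linear_combination etop
  have hcnK : (c n).natDegree = 0 := by
    by_contra h
    have hder : Polynomial.derivative (c n) ≠ 0 := fun hh =>
      h (Polynomial.natDegree_eq_zero_of_derivative_eq_zero hh)
    have hfac : l1 - (n : Polynomial K) * a2 ≠ 0 := by
      intro hh; rw [hh, zero_mul] at etop'; exact hder etop'
    have h1 := Polynomial.natDegree_derivative_lt h
    have h2 := Polynomial.natDegree_mul hfac hcn
    rw [← etop'] at h2
    omega
  obtain ⟨k, hk⟩ := Polynomial.natDegree_eq_zero.mp hcnK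
  have hk0 : k ≠ 0 := fun h => hcn (by rw [← hk, h, map_zero])
  have hl1 : l1 = (n : Polynomial K) * a2 := by
    have hd : Polynomial.derivative (c n) = 0 := by rw [← hk]; simp
    rw [hd] at etop'
    have := (mul_eq_zero.mp etop'.symm).resolve_right hcn
    exact sub_eq_zero.mp this
  -- Λ formula
  have hLam : Λ = (n : MvPolynomial (Fin 2) K) * Polynomial.aeval (MvPolynomial.X 0) a2 *
      MvPolynomial.X 1 + Polynomial.aeval (MvPolynomial.X 0) l0 := by
    rw [hΛ, hL, hl1]
    simp [map_natCast]
  -- c (n-1) equation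
  have hderiv : Polynomial.derivative (c (n - 1)) =
      a2 * c (n - 1) + (l0 - (n : Polynomial K) * a1) * c n := by
    have e := EG (n-1)
    rw [show n - 1 + 1 = n from by omega, show n - 1 + 2 = n + 1 from by omega] at e
    rw [hPc1 (n-1) (by omega), hPc1 n le_rfl, hPc2 (n+1) (by omega), hl1] at e
    rw [show ((n-1 : ℕ) : Polynomial K) = (n : Polynomial K) - 1 from by
      rw [Nat.cast_sub hn1]; norm_num] at e
    linear_combination e
  -- middle recurrence
  have hmid : ∀ i : ℕ, 1 ≤ i → i ≤ n - 1 →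
      ((i : Polynomial K) + 1) * Polynomial.C a0 * c (i + 1) =
        ((n : Polynomial K) - (i : Polynomial K) + 1) * a2 * c (i - 1) +
          (l0 - (i : Polynomial K) * a1) * c i - Polynomial.derivative (c (i - 1)) := by
    intro i hi1 hi2
    have e := EG (i-1)
    rw [show i - 1 + 1 = i from by omega, show i - 1 + 2 = i + 1 from by omega] at e
    rw [hPc1 (i-1) (by omega), hPc1 i (by omega), hPc1 (i+1) (by omega), hl1] at e
    rw [show ((i-1 : ℕ) : Polynomial K) = (i : Polynomial K) - 1 from by
      rw [Nat.cast_sub hi1]; norm_num] at e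
    linear_combination e
  -- lowest equation
  have hE0c : Polynomial.C a0 * c 1 = l0 * c 0 := by
    have := E0
    rwa [hPc1 1 hn1, hPc1 0 (by omega)] at this
  -- part 5
  have ha2ne : a2 ≠ 0 := by
    intro h
    rw [h, Polynomial.degree_zero] at ha2
    exact absurd ha2 (by norm_num)
  have ha2nd : 1 ≤ a2.natDegree := by
    by_contra h
    have h0 : a2.natDegree = 0 := by omega
    have := Polynomial.degree_le_of_natDegree_le (le_of_eq h0)
    rw [Nat.cast_zero] at this
    exact absurd (le_trans ha2 this) (by norm_num)
  have hpart5 : 2 ≤ n → c (n - 1) ≠ 0 ∧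
      ∀ k' : K, l0 - (n : Polynomial K) * a1 ≠ Polynomial.C k' := by
    intro hn2
    have hcm : c (n-1) ≠ 0 := by
      intro hz
      have hd0 : l0 = (n : Polynomial K) * a1 := by
        rw [hz] at hderiv
        simp only [Polynomial.derivative_zero, mul_zero, zero_add] at hderiv
        have := (mul_eq_zero.mp hderiv.symm).resolve_right hcn
        exact sub_eq_zero.mp this
      have e := hmid (n-1) (by omega) (by omega)
      rw [show n - 1 + 1 = n from by omega, hz, hd0] at e
      rw [show ((n-1 : ℕ) : Polynomial K) = (n : Polynomial K) - 1 from by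
        rw [Nat.cast_sub hn1]; norm_num, show c n = Polynomial.C k from hk.symm] at e
      set v := c (n - 1 - 1) with hv
      have e' : a2 * (2 * v) - Polynomial.derivative v =
          Polynomial.C ((n : K) * a0 * k) := by
        rw [show Polynomial.C ((n : K) * a0 * k) =
          (n : Polynomial K) * Polynomial.C a0 * Polynomial.C k from by
            simp [Polynomial.C_mul, Polynomial.C_eq_natCast]]
        linear_combination -e
      rcases eq_or_ne v 0 with hv0 | hv0
      · rw [hv0] at e'
        simp only [mul_zero, Polynomial.derivative_zero, sub_zero] at e'
        have : (n : K) * a0 * k ≠ 0 := by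
          refine mul_ne_zero (mul_ne_zero ?_ ha0) hk0
          exact_mod_cast Nat.cast_ne_zero.mpr (by omega)
        exact this (by
          have := congrArg (fun p => Polynomial.coeff p 0) e'
          simpa using this.symm)
      · have h2v : ((2 : Polynomial K) * v) ≠ 0 := mul_ne_zero two_ne_zero hv0
        have h2vd : ((2 : Polynomial K) * v).natDegree = v.natDegree := by
          rw [Polynomial.natDegree_mul two_ne_zero hv0]
          simp
        have hA : (a2 * (2 * v)).natDegree = a2.natDegree + v.natDegree := by
          rw [Polynomial.natDegree_mul ha2ne h2v, h2vd]
        have hBA : (Polynomial.derivative v).natDegree < (a2 * (2 * v)).natDegree := by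
          have := Polynomial.natDegree_derivative_le v
          omega
        have hsub := Polynomial.natDegree_sub_eq_left_of_natDegree_lt hBA
        rw [e'] at hsub
        rw [Polynomial.natDegree_C] at hsub
        omega
    refine ⟨hcm, ?_⟩
    intro k' hke
    have e := hderiv
    rw [hke, show c n = Polynomial.C k from hk.symm] at e
    have e' : a2 * c (n-1) = Polynomial.derivative (c (n-1)) - Polynomial.C (k' * k) := by
      rw [Polynomial.C_mul]
      linear_combination -e
    have h1 := Polynomial.natDegree_mul ha2ne hcm
    rw [e'] at h1
    have h2 : (Polynomial.derivative (c (n-1)) - Polynomial.C (k' * k)).natDegree ≤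
        (c (n-1)).natDegree := by
      refine (Polynomial.natDegree_sub_le _ _).trans (max_le ?_ ?_)
      · exact (Polynomial.natDegree_derivative_le _).trans (by omega)
      · rw [Polynomial.natDegree_C]; omega
    omega
  -- part 6
  have hpart6 : a1.degree = 0 → 2 ≤ n → 1 ≤ l0.degree ∧ c 1 * c 0 ≠ 0 := by
    intro hda1 hn2
    obtain ⟨hcm, hnotK⟩ := hpart5 hn2
    have ha1C : a1 = Polynomial.C (a1.coeff 0) :=
      Polynomial.eq_C_of_degree_le_zero (le_of_eq hda1)
    set u := a1.coeff 0 with hu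
    have hd0ne : l0.natDegree ≠ 0 := by
      intro h
      obtain ⟨v, hv⟩ := Polynomial.natDegree_eq_zero.mp h
      apply hnotK (v - (n : K) * u)
      rw [← hv, ha1C]
      simp [Polynomial.C_mul, Polynomial.C_eq_natCast, sub_eq_sub_iff_sub_eq_sub]
    have hl0ne : l0 ≠ 0 := fun h => hd0ne (by simp [h])
    have hdeg : 1 ≤ l0.degree := by
      rw [Polynomial.degree_eq_natDegree hl0ne]
      exact_mod_cast Nat.one_le_iff_ne_zero.mpr hd0ne
    have hCa0 : (Polynomial.C a0 : Polynomial K) ≠ 0 := by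
      simpa using ha0
    have hc0 : c 0 ≠ 0 := by
      intro hc0z
      have hzero : ∀ j, j + 1 ≤ n → c j = 0 ∧ c (j+1) = 0 := by
        intro j
        induction j with
        | zero =>
          intro _
          refine ⟨hc0z, ?_⟩
          have h := hE0c
          rw [hc0z, mul_zero] at h
          exact (mul_eq_zero.mp h).resolve_left hCa0
        | succ j ih =>
          intro hj
          obtain ⟨h1, h2⟩ := ih (by omega)
          refine ⟨h2, ?_⟩
          have e := hmid (j+1) (by omega) (by omega)
          rw [show j + 1 - 1 = j from by omega, h1, h2] at e
          simp only [mul_zero, zero_mul, add_zero, zero_add, Polynomial.derivative_zero,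
            sub_zero] at e
          have hne : ((j+1 : ℕ) : Polynomial K) + 1 ≠ 0 := by
            have h' : ((j+2 : ℕ) : Polynomial K) ≠ 0 := Nat.cast_ne_zero.mpr (by omega)
            push_cast at h' ⊢
            intro hcontra
            apply h'
            linear_combination hcontra
          rcases mul_eq_zero.mp e with h | h
          · exact absurd ((mul_eq_zero.mp h).resolve_left hne) hCa0
          · exact h
      have hlast := (hzero (n-1) (by omega)).2
      rw [show n - 1 + 1 = n from by omega] at hlast
      exact hcn hlast
    have hc1 : c 1 ≠ 0 := by
      intro h
      rw [h, mul_zero] at hE0c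
      exact (mul_ne_zero hl0ne hc0) hE0c.symm
    exact ⟨hdeg, mul_ne_zero hc1 hc0⟩
  exact ⟨hn1, ⟨k, hk0, hk.symm⟩, l0, hLam, hderiv, hmid, hE0c, hpart5, hpart6⟩
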